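/- Under the same hypotheses (m < n, F(x) = e^{-x²/2}∏_{j=1}^m(x-λ_j), 2nc² ∈ (0,1)), for any interval A ⊂ (0,c), setting A₁ = A ∪ (-A) and φ(A) = ∫_A u du: (1 - nc²)·2φ(A) ∫_ℝ |F|² ≤ ∫_ℝ dx₁ ∫_{x₁+A₁} dx₂ |x₁ - x₂| |F(x₁)||F(x₂)| ≤ 2φ(A) ∫_ℝ |F|². -/

import Mathlib

open MeasureTheory Polynomial Real Filter Set
open scoped ENNReal

noncomputable section
namespace Stmt12Aux

lemma cont_pg (b : ℝ) (p : ℝ[X]) : Continuous fun x : ℝ => Real.exp (-b * x ^ 2) * p.eval x := by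
  fun_prop

lemma integrable_pow_gauss {b : ℝ} (hb : 0 < b) (n : ℕ) :
    Integrable fun x : ℝ => x ^ n * Real.exp (-b * x ^ 2) := by
  have := integrable_rpow_mul_exp_neg_mul_sq hb (s := (n : ℝ)) (lt_of_lt_of_le neg_one_lt_zero (Nat.cast_nonneg n))
  simpa [Real.rpow_natCast] using this

lemma integrable_pg {b : ℝ} (hb : 0 < b) (p : ℝ[X]) :
    Integrable fun x : ℝ => Real.exp (-b * x ^ 2) * p.eval x := by
  have h : ∀ x : ℝ, Real.exp (-b * x ^ 2) * p.eval x
      = ∑ i ∈ Finset.range (p.natDegree + 1), p.coeff i * (x ^ i * Real.exp (-b * x ^ 2)) := by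
    intro x
    rw [Polynomial.eval_eq_sum_range, Finset.mul_sum]
    congr 1; ext i; ring
  simp_rw [h]
  exact integrable_finset_sum _ fun i _ => ((integrable_pow_gauss hb i).const_mul _)

lemma tendsto_pow_gauss_atTop (k : ℕ) :
    Tendsto (fun x : ℝ => x ^ k * Real.exp (-x ^ 2)) atTop (nhds 0) := by
  have h1 : Tendsto (fun y : ℝ => y ^ k * Real.exp (-y)) atTop (nhds 0) :=
    tendsto_pow_mul_exp_neg_atTop_nhds_zero k
  have h2 : Tendsto (fun x : ℝ => x ^ 2) atTop atTop := by
    exact tendsto_pow_atTop (by norm_num)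
  have h3 : Tendsto (fun x : ℝ => (x ^ 2) ^ k * Real.exp (-x ^ 2)) atTop (nhds 0) :=
    h1.comp h2
  apply squeeze_zero_norm' _ h3
  filter_upwards [eventually_ge_atTop (1 : ℝ)] with x hx
  have hx0 : (0:ℝ) ≤ x := le_trans zero_le_one hx
  have hle : x ^ k ≤ (x ^ 2) ^ k := by
    apply pow_le_pow_left₀ hx0
    nlinarith
  rw [Real.norm_eq_abs, abs_mul, abs_of_nonneg (pow_nonneg hx0 _),
    abs_of_nonneg (Real.exp_pos _).le]
  exact mul_le_mul_of_nonneg_right hle (Real.exp_pos _).le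

lemma tendsto_pg_atTop (p : ℝ[X]) :
    Tendsto (fun x : ℝ => Real.exp (-x ^ 2) * p.eval x) atTop (nhds 0) := by
  have h : ∀ x : ℝ, Real.exp (-x ^ 2) * p.eval x
      = ∑ i ∈ Finset.range (p.natDegree + 1), p.coeff i * (x ^ i * Real.exp (-x ^ 2)) := by
    intro x
    rw [Polynomial.eval_eq_sum_range, Finset.mul_sum]
    congr 1; ext i; ring
  simp_rw [h]
  have : Tendsto (fun x : ℝ => ∑ i ∈ Finset.range (p.natDegree + 1),
      p.coeff i * (x ^ i * Real.exp (-x ^ 2))) atTop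
      (nhds (∑ i ∈ Finset.range (p.natDegree + 1), p.coeff i * 0)) := by
    apply tendsto_finset_sum
    intro i _
    exact (tendsto_pow_gauss_atTop i).const_mul _
  simpa using this

lemma tendsto_pg_atBot (p : ℝ[X]) :
    Tendsto (fun x : ℝ => Real.exp (-x ^ 2) * p.eval x) atBot (nhds 0) := by
  have h := tendsto_pg_atTop (p.comp (-X))
  have h2 : Tendsto (fun x : ℝ => -x) atBot atTop := tendsto_neg_atBot_atTop
  have h3 := h.comp h2
  simp only [Function.comp_def] at h3
  convert h3 using 2 with x
  simp [Polynomial.eval_comp]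

lemma integrable_pg1 (p : ℝ[X]) : Integrable fun x : ℝ => Real.exp (-x ^ 2) * p.eval x := by
  have := integrable_pg one_pos p
  simpa using this

/-- The Gaussian-weighted integral of a polynomial. -/
def ig (p : ℝ[X]) : ℝ := ∫ x : ℝ, Real.exp (-x ^ 2) * p.eval x

lemma ig_add (p q : ℝ[X]) : ig (p + q) = ig p + ig q := by
  unfold ig
  rw [← integral_add (integrable_pg1 p) (integrable_pg1 q)]
  congr 1; ext x; simp; ring

lemma ig_sub (p q : ℝ[X]) : ig (p - q) = ig p - ig q := by
  unfold ig
  rw [← integral_sub (integrable_pg1 p) (integrable_pg1 q)]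
  congr 1; ext x; simp; ring

lemma ig_cmul (r : ℝ) (p : ℝ[X]) : ig (C r * p) = r * ig p := by
  unfold ig
  rw [← integral_const_mul]
  congr 1; ext x; simp; ring

lemma ig_sq_nonneg (p : ℝ[X]) : 0 ≤ ig (p ^ 2) := by
  apply integral_nonneg
  intro x
  simp only [eval_pow]
  positivity

/-- integral of d/dx (e^{-x²} u(x)) is zero -/
lemma igZ (u : ℝ[X]) : ig (2 * X * u - derivative u) = 0 := by
  set f : ℝ → ℝ := fun x => Real.exp (-x ^ 2) * u.eval x with hf
  set v : ℝ[X] := derivative u - 2 * X * u with hv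
  have hder : ∀ x : ℝ, HasDerivAt f (Real.exp (-x ^ 2) * v.eval x) x := by
    intro x
    have h1 : HasDerivAt (fun x : ℝ => -x ^ 2) (-(2 * x)) x := by
      exact ((hasDerivAt_pow 2 x).neg).congr_deriv (by norm_num)
    have h2 : HasDerivAt (fun x : ℝ => Real.exp (-x ^ 2)) (Real.exp (-x ^ 2) * (-(2 * x))) x :=
      h1.exp
    have h3 : HasDerivAt (fun x : ℝ => u.eval x) (u.derivative.eval x) x :=
      u.hasDerivAt x
    have h4 := h2.mul h3
    refine h4.congr_deriv ?_
    simp [hv]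
    ring
  have hint : Integrable (fun x : ℝ => Real.exp (-x ^ 2) * v.eval x) := integrable_pg1 v
  have htop : Tendsto f atTop (nhds 0) := tendsto_pg_atTop u
  have hbot : Tendsto f atBot (nhds 0) := tendsto_pg_atBot u
  have hIic : ∫ x in Iic (0:ℝ), Real.exp (-x ^ 2) * v.eval x = f 0 - 0 :=
    integral_Iic_of_hasDerivAt_of_tendsto' (fun x _ => hder x) hint.integrableOn hbot
  have hIoi : ∫ x in Ioi (0:ℝ), Real.exp (-x ^ 2) * v.eval x = 0 - f 0 :=
    integral_Ioi_of_hasDerivAt_of_tendsto' (fun x _ => hder x) hint.integrableOn htop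
  have hsplit : ig v = 0 := by
    unfold ig
    rw [← integral_add_compl (measurableSet_Iic (a := (0:ℝ))) hint, compl_Iic, hIic, hIoi]
    ring
  have h2 : (2 * X * u - derivative u : ℝ[X]) = 0 - v := by rw [hv]; ring
  have h0 : ig 0 = 0 := by unfold ig; simp
  rw [h2, ig_sub, hsplit, h0, sub_zero]

lemma ig_adjoint (q r : ℝ[X]) :
    ig ((2 * X * q - derivative q) * r) = ig (q * derivative r) := by
  have key : (2 * X * q - derivative q) * r - q * derivative r
      = 2 * X * (q * r) - derivative (q * r) := by
    rw [derivative_mul]; ring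
  have := igZ (q * r)
  rw [← key] at this
  rw [ig_sub] at this
  linarith

lemma ig_zero : ig 0 = 0 := by
  have := ig_sub 0 0
  simpa using this

lemma ig_sq_add (u v : ℝ[X]) :
    ig ((u + v) ^ 2) = ig (u ^ 2) + 2 * ig (u * v) + ig (v ^ 2) := by
  have e : (u + v) ^ 2 = (u ^ 2 + C 2 * (u * v)) + v ^ 2 := by
    simp only [map_ofNat]; ring
  rw [e, ig_add, ig_add, ig_cmul]

lemma igCsq (u : ℝ[X]) :
    ig ((2 * X * u - derivative u) ^ 2) = ig ((derivative u) ^ 2) + 2 * ig (u ^ 2) := by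
  have e0 : ((2 * X * u - derivative u) ^ 2 : ℝ[X])
      = (2 * X * u - derivative u) * (2 * X * u - derivative u) := by ring
  rw [e0, ig_adjoint]
  have e1 : (u * derivative (2 * X * u - derivative u) : ℝ[X])
      = C 2 * u ^ 2 + (2 * X * derivative u - derivative (derivative u)) * u := by
    simp only [derivative_sub, derivative_mul, derivative_X, derivative_ofNat]
    simp only [map_ofNat]
    ring
  rw [e1, ig_add, ig_cmul, ig_adjoint]
  have e2 : (derivative u * derivative u : ℝ[X]) = (derivative u) ^ 2 := by ring
  rw [e2]; ring

/-- decomposition: every polynomial is `2Xq - q' + c` with `q` of lower degree -/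
lemma decomp : ∀ (d : ℕ) (p : ℝ[X]), p.natDegree ≤ d →
    ∃ (q : ℝ[X]) (c : ℝ), p = 2 * X * q - derivative q + C c ∧
      (q = 0 ∨ q.natDegree + 1 ≤ p.natDegree) := by
  intro d
  induction d with
  | zero =>
    intro p hp
    refine ⟨0, p.coeff 0, ?_, Or.inl rfl⟩
    have := Polynomial.eq_C_of_natDegree_le_zero hp
    simpa using this
  | succ d IH =>
    intro p hp
    by_cases hple : p.natDegree ≤ d
    · exact IH p hple
    · have hdeg : p.natDegree = d + 1 := le_antisymm hp (by omega)
      set lc := p.leadingCoeff with hlc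
      set q₁ : ℝ[X] := C (lc / 2) * X ^ d with hq₁
      have hq₁d : q₁.natDegree ≤ d := natDegree_C_mul_X_pow_le _ _
      have h2xq : 2 * X * q₁ = C lc * X ^ (d + 1) := by
        rw [hq₁]
        have : C lc = C 2 * C (lc / 2) := by
          rw [← C_mul]; congr 1; ring
        rw [this]
        simp only [map_ofNat]
        ring
      set r : ℝ[X] := p - (2 * X * q₁ - derivative q₁) with hr
      have hrd : r.natDegree ≤ d := by
        have hr2 : r = (p - C lc * X ^ (d + 1)) + derivative q₁ := by
          rw [hr, h2xq]; ring
        have h1 : (p - C lc * X ^ (d + 1)).natDegree ≤ d := by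
          have he : p.eraseLead = p - C lc * X ^ (d + 1) := by
            have := p.eraseLead_add_C_mul_X_pow
            rw [hdeg] at this
            rw [← hlc] at this
            linear_combination (norm := ring_nf) this - p
          rw [← he]
          have := p.eraseLead_natDegree_le
          omega
        have h2 : (derivative q₁).natDegree ≤ d :=
          le_trans (natDegree_derivative_le q₁) (by omega)
        rw [hr2]
        exact le_trans (natDegree_add_le _ _) (by omega)
      obtain ⟨q₂, c, hrq, halt⟩ := IH r hrd
      refine ⟨q₁ + q₂, c, ?_, ?_⟩
      · have : p = r + (2 * X * q₁ - derivative q₁) := by rw [hr]; ring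
        rw [this, hrq, derivative_add]
        ring
      · right
        have hq₂d : q₂.natDegree ≤ d := by
          rcases halt with h | h
          · simp [h]
          · omega
        have : (q₁ + q₂).natDegree ≤ d := le_trans (natDegree_add_le _ _) (by omega)
        omega

/-- sharp spectral bound: `∫ e^{-x²} p'² ≤ 2 deg(p) ∫ e^{-x²} p²` -/
lemma spectral : ∀ (m : ℕ) (p : ℝ[X]), p.natDegree ≤ m →
    ig ((derivative p) ^ 2) ≤ 2 * m * ig (p ^ 2) := by
  intro m
  induction m using Nat.strong_induction_on with
  | _ m IH =>
    match m with
    | 0 =>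
      intro p hp
      have h0 : derivative p = 0 := by
        rw [Polynomial.eq_C_of_natDegree_le_zero hp]
        simp
      rw [h0]
      have : ((0 : ℝ[X]) ^ 2) = 0 := by ring
      rw [this, ig_zero]
      simp
    | Nat.succ m =>
      intro p hp
      obtain ⟨q, c, hpq, hqd⟩ := decomp (m + 1) p hp
      have hq : q.natDegree ≤ m := by
        rcases hqd with h | h
        · simp [h]
        · omega
      set q1 := derivative q with hq1
      set q2 := derivative q1 with hq2
      have hig1 : 0 ≤ ig 1 := by
        have := ig_sq_nonneg 1
        simpa using this
      -- value of ig (p^2)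
      have hw : ig (p ^ 2) = ig (q1 ^ 2) + 2 * ig (q ^ 2) + c ^ 2 * ig 1 := by
        rw [hpq, ig_sq_add, igCsq]
        have h1 : ig ((2 * X * q - derivative q) * C c) = 0 := by
          rw [ig_adjoint]
          simp [ig_zero]
        have h2 : ig ((C c) ^ 2) = c ^ 2 * ig 1 := by
          have : ((C c) ^ 2 : ℝ[X]) = C (c ^ 2) * 1 := by
            rw [← C_pow]; ring
          rw [this, ig_cmul]
        rw [h1, h2, ← hq1]
        ring
      -- value of ig ((p')^2)
      have hdp : derivative p = (2 * X * q1 - q2) + 2 * q := by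
        rw [hpq]
        simp only [derivative_add, derivative_sub, derivative_mul, derivative_X,
          derivative_C, derivative_ofNat, hq1, hq2]
        ring
      have hcross : ig ((2 * X * q1 - q2) * (2 * q)) = 2 * ig (q1 ^ 2) := by
        rw [hq2, ig_adjoint]
        have : (q1 * derivative (2 * q) : ℝ[X]) = C 2 * q1 ^ 2 := by
          simp only [derivative_mul, derivative_ofNat, hq1, map_ofNat]
          ring
        rw [this, ig_cmul]
      have hsq : ig ((2 * q) ^ 2) = 4 * ig (q ^ 2) := by
        have : ((2 * q) ^ 2 : ℝ[X]) = C 4 * q ^ 2 := by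
          simp only [map_ofNat]; ring
        rw [this, ig_cmul]
      have hDp : ig ((derivative p) ^ 2)
          = ig (q2 ^ 2) + 6 * ig (q1 ^ 2) + 4 * ig (q ^ 2) := by
        rw [hdp, ig_sq_add, hcross, hsq]
        have : ig ((2 * X * q1 - q2) ^ 2) = ig (q2 ^ 2) + 2 * ig (q1 ^ 2) := by
          rw [hq2]; exact igCsq q1
        rw [this]
        ring
      have hq1nn : 0 ≤ ig (q1 ^ 2) := ig_sq_nonneg q1
      have hqnn : 0 ≤ ig (q ^ 2) := ig_sq_nonneg q
      have hcnn : 0 ≤ c ^ 2 * ig 1 := mul_nonneg (sq_nonneg c) hig1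
      match m with
      | 0 =>
        have hq10 : q1 = 0 := by
          rw [hq1, Polynomial.eq_C_of_natDegree_le_zero hq]
          simp
        have hq20 : q2 = 0 := by rw [hq2, hq10]; simp
        rw [hDp, hw, hq10, hq20]
        have hz : ig ((0:ℝ[X]) ^ 2) = 0 := by
          have : ((0 : ℝ[X]) ^ 2) = 0 := by ring
          rw [this, ig_zero]
        rw [hz]
        push_cast
        nlinarith [hqnn, hcnn]
      | Nat.succ k =>
        have hIH1 : ig (q1 ^ 2) ≤ 2 * (k + 1) * ig (q ^ 2) := by
          have := IH (k + 1) (by omega) q hq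
          push_cast at this ⊢
          convert this using 2
        have hq1d : q1.natDegree ≤ k := by
          have h := natDegree_derivative_le q
          rw [hq1]
          omega
        have hIH2 : ig (q2 ^ 2) ≤ 2 * k * ig (q1 ^ 2) := by
          have := IH k (by omega) q1 hq1d
          push_cast at this ⊢
          convert this using 2
        rw [hDp, hw]
        push_cast
        nlinarith [hIH1, hIH2, hq1nn, hqnn, hcnn]

/-- the bound `∫ F'² ≤ 2m ∫ F²` in polynomial form -/
lemma gbound (k : ℕ) (p : ℝ[X]) (hp : p.natDegree ≤ k + 1) :
    ig ((derivative p - X * p) ^ 2) ≤ 2 * (k + 1) * ig (p ^ 2) := by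
  set d := derivative p with hd
  set d2 := derivative d with hd2
  set m' : ℝ := (k : ℝ) + 1 with hm'
  have hm1 : (1:ℝ) ≤ m' := by
    rw [hm']
    have : (0:ℝ) ≤ (k:ℝ) := Nat.cast_nonneg k
    linarith
  set G := ig ((d - X * p) ^ 2) with hG
  set D := ig (d ^ 2) with hD
  set Pp := ig (p ^ 2) with hPp
  set Xv := ig (p * d2) with hXv
  set Y := ig (d2 ^ 2) with hY
  -- 2G = D + Pp - Xv
  have key1 : 2 * G = D + Pp - Xv := by
    have h4 : 4 * G = ig ((d - (2 * X * p - d)) ^ 2) := by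
      rw [hG, ← ig_cmul]
      congr 1
      simp only [map_ofNat]
      ring
    have e : ((d - (2 * X * p - d)) ^ 2 : ℝ[X])
        = (2 * X * p - d) ^ 2 - C 2 * ((2 * X * p - d) * d) + d ^ 2 := by
      simp only [map_ofNat]; ring
    rw [e, ig_add, ig_sub, ig_cmul, ig_adjoint, igCsq] at h4
    linarith [h4, hD, hPp, hXv]
  -- AM-GM : 0 ≤ ig ((C (2m') p + d2)^2)
  have amgm : 0 ≤ 4 * m' ^ 2 * Pp + 4 * m' * Xv + Y := by
    have h0 := ig_sq_nonneg (C (2 * m') * p + d2)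
    rw [ig_sq_add] at h0
    have e1 : ((C (2 * m') * p) ^ 2 : ℝ[X]) = C ((2 * m') ^ 2) * p ^ 2 := by
      rw [mul_pow, ← C_pow]
    have e2 : (C (2 * m') * p * d2 : ℝ[X]) = C (2 * m') * (p * d2) := by ring
    rw [e1, e2, ig_cmul, ig_cmul] at h0
    have hr : ((2 * m') ^ 2 : ℝ) = 4 * m' ^ 2 := by ring
    rw [hr] at h0
    linarith [h0, hPp, hXv, hY]
  have hs1 : D ≤ 2 * m' * Pp := by
    have h := spectral (k + 1) p hp
    push_cast at h
    rw [hm']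
    linarith [h, hD, hPp]
  have hs2 : Y ≤ 2 * (k:ℝ) * D := by
    have hdd : d.natDegree ≤ k := by
      have h := natDegree_derivative_le p
      rw [hd]
      omega
    have h := spectral k d hdd
    linarith [h, hY, hD]
  have hPnn : 0 ≤ Pp := ig_sq_nonneg p
  have hDnn : 0 ≤ D := ig_sq_nonneg d
  have key : (8 * m') * G ≤ (8 * m') * (2 * m' * Pp) := by
    have hmul := mul_le_mul_of_nonneg_left hs1 (by positivity : (0:ℝ) ≤ 4 * m' + 2 * k)
    have hkm : (k : ℝ) = m' - 1 := by rw [hm']; ring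
    nlinarith [amgm, hs2, hmul, key1, hDnn, hPnn]
  have h8 : (0:ℝ) < 8 * m' := by positivity
  have := (mul_le_mul_iff_right₀ h8).mp key
  rw [hm'] at this
  push_cast
  calc G ≤ 2 * ((k:ℝ) + 1) * Pp := this
    _ = 2 * ((k:ℝ) + 1) * ig (p ^ 2) := rfl

lemma indicator_mul_form (s : Set ℝ) (f : ℝ → ℝ≥0∞) (u : ℝ) :
    s.indicator f u = f u * s.indicator 1 u := by
  by_cases h : u ∈ s <;> simp [h]

lemma gen_swap (φ g w : ℝ → ℝ) (s : Set ℝ) (hs : MeasurableSet s)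
    (hφ : Continuous φ) (hφ0 : ∀ x, 0 ≤ φ x)
    (hg : Continuous g) (hg0 : ∀ x, 0 ≤ g x)
    (hw : Continuous w) (hw0 : ∀ x, 0 ≤ w x)
    (hG : ∀ x : ℝ, (∫⁻ u in s, ENNReal.ofReal (w u * g (x + u))) ≠ ⊤)
    (hΛ : ∀ u : ℝ, (∫⁻ x : ℝ, ENNReal.ofReal (φ x * g (x + u))) ≠ ⊤)
    (hTot : (∫⁻ u in s, ENNReal.ofReal (w u) * ∫⁻ x : ℝ, ENNReal.ofReal (φ x * g (x + u))) ≠ ⊤) :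
    (∫ x : ℝ, φ x * ∫ u in s, w u * g (x + u))
      = (∫ u in s, w u * ∫ x : ℝ, φ x * g (x + u))
    ∧ Integrable (fun x : ℝ => φ x * ∫ u in s, w u * g (x + u))
    ∧ IntegrableOn (fun u : ℝ => w u * ∫ x : ℝ, φ x * g (x + u)) s := by
  classical
  set H : ℝ → ℝ → ℝ≥0∞ :=
    fun x u => ENNReal.ofReal (w u * g (x + u)) * s.indicator 1 u with hH
  have measH : Measurable (Function.uncurry H) := by
    apply Measurable.mul
    · exact ((hw.comp continuous_snd).mul
        (hg.comp (continuous_fst.add continuous_snd))).measurable.ennreal_ofReal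
    · exact (measurable_one.indicator hs).comp measurable_snd
  set G : ℝ → ℝ≥0∞ := fun x => ∫⁻ u, H x u with hGdef'
  have measG : Measurable G := measH.lintegral_prod_right'
  have hGdef : ∀ x, G x = ∫⁻ u in s, ENNReal.ofReal (w u * g (x + u)) := by
    intro x
    rw [hGdef', ← lintegral_indicator hs]
    apply lintegral_congr
    intro u
    rw [indicator_mul_form]
  set Λ : ℝ → ℝ≥0∞ := fun u => ∫⁻ x : ℝ, ENNReal.ofReal (φ x * g (x + u)) with hΛdef
  have measΛ : Measurable Λ := by
    have : Measurable (Function.uncurry fun (u x : ℝ) => ENNReal.ofReal (φ x * g (x + u))) := by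
      exact ((hφ.comp continuous_snd).mul
        (hg.comp (continuous_snd.add continuous_fst))).measurable.ennreal_ofReal
    exact this.lintegral_prod_right'
  -- inner integral conversions
  have Lint : ∀ x : ℝ, (∫ u in s, w u * g (x + u)) = (G x).toReal := by
    intro x
    rw [hGdef x]
    rw [integral_eq_lintegral_of_nonneg_ae
      (ae_of_all _ fun u => mul_nonneg (hw0 u) (hg0 (x + u)))
      ((hw.mul (hg.comp (continuous_const.add continuous_id))).aestronglyMeasurable.restrict)]
  have hL1 : ∀ x : ℝ, φ x * (∫ u in s, w u * g (x + u))
      = (ENNReal.ofReal (φ x) * G x).toReal := by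
    intro x
    rw [Lint x, ENNReal.toReal_mul, ENNReal.toReal_ofReal (hφ0 x)]
  have ΛtoReal : ∀ u : ℝ, (∫ x : ℝ, φ x * g (x + u)) = (Λ u).toReal := by
    intro u
    rw [hΛdef]
    rw [integral_eq_lintegral_of_nonneg_ae
      (ae_of_all _ fun x => mul_nonneg (hφ0 x) (hg0 (x + u)))
      ((hφ.mul (hg.comp (continuous_id.add continuous_const))).aestronglyMeasurable)]
  have hR1 : ∀ u : ℝ, w u * (∫ x : ℝ, φ x * g (x + u))
      = (ENNReal.ofReal (w u) * Λ u).toReal := by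
    intro u
    rw [ΛtoReal u, ENNReal.toReal_mul, ENNReal.toReal_ofReal (hw0 u)]
  -- the lintegral swap
  have hswap : (∫⁻ x : ℝ, ENNReal.ofReal (φ x) * G x)
      = ∫⁻ u in s, ENNReal.ofReal (w u) * Λ u := by
    have step1 : (∫⁻ x : ℝ, ENNReal.ofReal (φ x) * G x)
        = ∫⁻ x : ℝ, ∫⁻ u : ℝ, ENNReal.ofReal (φ x) * H x u := by
      congr 1; ext x
      rw [hGdef']
      exact (lintegral_const_mul' _ _ ENNReal.ofReal_ne_top).symm
    have measK : AEMeasurable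
        (Function.uncurry fun (x u : ℝ) => ENNReal.ofReal (φ x) * H x u)
        ((volume : Measure ℝ).prod volume) := by
      apply Measurable.aemeasurable
      exact ((hφ.comp continuous_fst).measurable.ennreal_ofReal).mul measH
    have step2 : (∫⁻ x : ℝ, ∫⁻ u : ℝ, ENNReal.ofReal (φ x) * H x u)
        = ∫⁻ u : ℝ, ∫⁻ x : ℝ, ENNReal.ofReal (φ x) * H x u :=
      lintegral_lintegral_swap measK
    have step3 : (∫⁻ u : ℝ, ∫⁻ x : ℝ, ENNReal.ofReal (φ x) * H x u)
        = ∫⁻ u : ℝ, (ENNReal.ofReal (w u) * Λ u) * s.indicator 1 u := by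
      congr 1; ext u
      have e1 : ∀ x : ℝ, ENNReal.ofReal (φ x) * H x u
          = (ENNReal.ofReal (w u) * ENNReal.ofReal (φ x * g (x + u))) * s.indicator 1 u := by
        intro x
        simp only [hH]
        rw [← mul_assoc, ← ENNReal.ofReal_mul (hφ0 x),
          show φ x * (w u * g (x + u)) = w u * (φ x * g (x + u)) by ring,
          ENNReal.ofReal_mul (hw0 u)]
      simp_rw [e1]
      rw [lintegral_mul_const' _ _ (by
        by_cases h : u ∈ s <;> simp [h])]
      rw [lintegral_const_mul' _ _ ENNReal.ofReal_ne_top]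
    have step4 : (∫⁻ u : ℝ, (ENNReal.ofReal (w u) * Λ u) * s.indicator 1 u)
        = ∫⁻ u in s, ENNReal.ofReal (w u) * Λ u := by
      rw [← lintegral_indicator hs]
      apply lintegral_congr
      intro u
      by_cases h : u ∈ s <;> simp [h]
    rw [step1, step2, step3, step4]
  have measφG : Measurable fun x : ℝ => ENNReal.ofReal (φ x) * G x :=
    (hφ.measurable.ennreal_ofReal).mul measG
  have finφG : ∀ x : ℝ, ENNReal.ofReal (φ x) * G x < ⊤ := by
    intro x
    apply ENNReal.mul_lt_top ENNReal.ofReal_lt_top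
    rw [hGdef x]
    exact lt_top_iff_ne_top.2 (hG x)
  have measwΛ : Measurable fun u : ℝ => ENNReal.ofReal (w u) * Λ u :=
    (hw.measurable.ennreal_ofReal).mul measΛ
  have finwΛ : ∀ u : ℝ, ENNReal.ofReal (w u) * Λ u < ⊤ := by
    intro u
    exact ENNReal.mul_lt_top ENNReal.ofReal_lt_top (lt_top_iff_ne_top.2 (hΛ u))
  have hLHS : (∫ x : ℝ, φ x * ∫ u in s, w u * g (x + u))
      = (∫⁻ x : ℝ, ENNReal.ofReal (φ x) * G x).toReal := by
    simp_rw [hL1]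
    exact integral_toReal measφG.aemeasurable (ae_of_all _ finφG)
  have hRHS : (∫ u in s, w u * ∫ x : ℝ, φ x * g (x + u))
      = (∫⁻ u in s, ENNReal.ofReal (w u) * Λ u).toReal := by
    simp_rw [hR1]
    exact integral_toReal measwΛ.aemeasurable.restrict (ae_of_all _ finwΛ)
  refine ⟨by rw [hLHS, hRHS, hswap], ?_, ?_⟩
  · have : Integrable (fun x : ℝ => (ENNReal.ofReal (φ x) * G x).toReal) := by
      apply integrable_toReal_of_lintegral_ne_top measφG.aemeasurable
      rw [hswap]
      exact hTot
    exact this.congr (ae_of_all _ fun x => (hL1 x).symm)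
  · have : Integrable (fun u : ℝ => (ENNReal.ofReal (w u) * Λ u).toReal)
        ((volume : Measure ℝ).restrict s) := by
      apply integrable_toReal_of_lintegral_ne_top measwΛ.aemeasurable.restrict
      exact hTot
    exact this.congr (ae_of_all _ fun u => (hR1 u).symm)

lemma ig_def : ∀ p : ℝ[X], ig p = ∫ x : ℝ, Real.exp (-x ^ 2) * p.eval x := fun _ => rfl

/-- the function `e^{-x²/2} p(x)` -/
def Ff (P : ℝ[X]) : ℝ → ℝ := fun x => Real.exp (-x ^ 2 / 2) * P.eval x

/-- its derivative -/
def F1 (P : ℝ[X]) : ℝ → ℝ := Ff (derivative P - X * P)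

lemma contFf (P : ℝ[X]) : Continuous (Ff P) := by unfold Ff; fun_prop

lemma Ffmul (P Q : ℝ[X]) (x : ℝ) :
    Ff P x * Ff Q x = Real.exp (-x ^ 2) * (P * Q).eval x := by
  unfold Ff
  rw [eval_mul]
  rw [show Real.exp (-x ^ 2 / 2) * eval x P * (Real.exp (-x ^ 2 / 2) * eval x Q)
    = Real.exp (-x ^ 2 / 2) * Real.exp (-x ^ 2 / 2) * (eval x P * eval x Q) by ring,
    ← Real.exp_add]
  congr 2
  ring

lemma Ffsq (P : ℝ[X]) (x : ℝ) : Ff P x ^ 2 = Real.exp (-x ^ 2) * (P ^ 2).eval x := by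
  rw [sq, Ffmul, ← sq]

lemma intFfsq (P : ℝ[X]) : Integrable (fun x => Ff P x ^ 2) := by
  simp_rw [Ffsq]
  have := integrable_pg one_pos (P ^ 2)
  simpa using this

lemma intgFfsq (P : ℝ[X]) : (∫ x : ℝ, Ff P x ^ 2) = ig (P ^ 2) := by
  rw [ig_def]
  apply integral_congr_ae
  apply ae_of_all
  intro x
  exact Ffsq P x

lemma intFf (P : ℝ[X]) : Integrable (Ff P) := by
  have h := integrable_pg (b := 1/2) (by norm_num) P
  apply h.congr
  apply ae_of_all
  intro x
  show Real.exp (-(1/2) * x ^ 2) * P.eval x = Ff P x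
  unfold Ff
  rw [show (-x ^ 2 / 2 : ℝ) = -(1/2) * x ^ 2 by ring]

lemma intabsFf (P : ℝ[X]) : Integrable (fun x => |Ff P x|) := (intFf P).abs

lemma hasDerivFf (P : ℝ[X]) (x : ℝ) : HasDerivAt (Ff P) (F1 P x) x := by
  have h1 : HasDerivAt (fun x : ℝ => -x ^ 2 / 2) (-x) x := by
    have h := ((hasDerivAt_pow 2 x).neg).div_const 2
    refine h.congr_deriv ?_
    push_cast
    ring
  have h2 := h1.exp
  have h3 := P.hasDerivAt x
  have h4 := h2.mul h3
  refine h4.congr_deriv ?_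
  unfold F1 Ff
  simp only [eval_sub, eval_mul, eval_X]
  ring

lemma contF1 (P : ℝ[X]) : Continuous (F1 P) := contFf _

lemma intF1sq (P : ℝ[X]) : Integrable (fun x => F1 P x ^ 2) := intFfsq _

lemma DB (P : ℝ[X]) (k : ℕ) (h : P.natDegree ≤ k + 1) :
    (∫ x : ℝ, F1 P x ^ 2) ≤ 2 * (k + 1) * ∫ x : ℝ, Ff P x ^ 2 := by
  have e1 : (∫ x : ℝ, F1 P x ^ 2) = ig ((derivative P - X * P) ^ 2) := intgFfsq _
  rw [e1, intgFfsq]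
  exact gbound k P h

/-- Cauchy-Schwarz on an interval -/
lemma csi (h : ℝ → ℝ) (hc : Continuous h) {x y : ℝ} (hxy : x ≤ y) :
    (∫ u in x..y, h u) ^ 2 ≤ (y - x) * ∫ u in x..y, h u ^ 2 := by
  rcases eq_or_lt_of_le hxy with rfl | hlt
  · simp
  · set T := y - x with hT
    have hT0 : 0 < T := by rw [hT]; linarith
    set μ := ∫ u in x..y, h u with hμ
    set I2 := ∫ u in x..y, h u ^ 2 with hI2
    have hint1 : IntervalIntegrable h volume x y := hc.intervalIntegrable x y
    have hint2 : IntervalIntegrable (fun u => h u ^ 2) volume x y :=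
      (hc.pow 2).intervalIntegrable x y
    have hint3 : IntervalIntegrable (fun u => (2 * (μ / T)) * h u) volume x y :=
      (continuous_const.mul hc).intervalIntegrable x y
    have h0 : 0 ≤ ∫ u in x..y, (h u - μ / T) ^ 2 :=
      intervalIntegral.integral_nonneg hxy (fun u _ => sq_nonneg _)
    have e : ∀ u : ℝ, (h u - μ / T) ^ 2 = (h u ^ 2 - (2 * (μ / T)) * h u) + (μ / T) ^ 2 := by
      intro u; ring
    rw [intervalIntegral.integral_congr (fun u _ => e u)] at h0
    rw [intervalIntegral.integral_add (hint2.sub hint3) intervalIntegrable_const,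
      intervalIntegral.integral_sub hint2 hint3,
      intervalIntegral.integral_const_mul, intervalIntegral.integral_const] at h0
    rw [← hμ, ← hI2] at h0
    have key : μ ^ 2 / T ≤ I2 := by
      have e2 : 2 * (μ / T) * μ - (y - x) • (μ / T) ^ 2 = μ ^ 2 / T := by
        rw [smul_eq_mul, ← hT]
        field_simp
        ring
      linarith [h0, e2]
    calc μ ^ 2 = (μ ^ 2 / T) * T := by field_simp
    _ ≤ I2 * T := mul_le_mul_of_nonneg_right key hT0.le
    _ = (y - x) * I2 := by rw [← hT]; ring

lemma int_shift_sq (P : ℝ[X]) (t : ℝ) : Integrable (fun x => Ff P (x + t) ^ 2) :=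
  (intFfsq P).comp_add_right t

lemma int_absprod (P : ℝ[X]) (t : ℝ) :
    Integrable (fun x => |Ff P x| * |Ff P (x + t)|) := by
  apply Integrable.mono' (g := fun x => (Ff P x ^ 2 + Ff P (x + t) ^ 2) / 2)
    (((intFfsq P).add (int_shift_sq P t)).div_const 2)
  · exact (((contFf P).abs).mul (((contFf P).comp (continuous_id.add continuous_const)).abs)).aestronglyMeasurable
  · apply ae_of_all
    intro x
    rw [Real.norm_eq_abs, abs_of_nonneg (mul_nonneg (abs_nonneg _) (abs_nonneg _))]
    nlinarith [sq_nonneg (|Ff P x| - |Ff P (x + t)|), sq_abs (Ff P x), sq_abs (Ff P (x + t))]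

lemma int_prod (P : ℝ[X]) (t : ℝ) :
    Integrable (fun x => Ff P x * Ff P (x + t)) := by
  apply Integrable.mono' (g := fun x => (Ff P x ^ 2 + Ff P (x + t) ^ 2) / 2)
    (((intFfsq P).add (int_shift_sq P t)).div_const 2)
  · exact ((contFf P).mul ((contFf P).comp (continuous_id.add continuous_const))).aestronglyMeasurable
  · apply ae_of_all
    intro x
    rw [Real.norm_eq_abs, abs_mul]
    nlinarith [sq_nonneg (|Ff P x| - |Ff P (x + t)|), sq_abs (Ff P x), sq_abs (Ff P (x + t))]

lemma int_diffsq (P : ℝ[X]) (t : ℝ) :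
    Integrable (fun x => (Ff P (x + t) - Ff P x) ^ 2) := by
  have e : ∀ x : ℝ, (Ff P (x + t) - Ff P x) ^ 2
      = (Ff P (x + t) ^ 2 + Ff P x ^ 2) - 2 * (Ff P x * Ff P (x + t)) := by
    intro x; ring
  simp_rw [e]
  exact ((int_shift_sq P t).add (intFfsq P)).sub ((int_prod P t).const_mul 2)

lemma int_sumsq (P : ℝ[X]) (t : ℝ) :
    Integrable (fun x => (Ff P x ^ 2 + Ff P (x + t) ^ 2) / 2) := by
  have h := ((intFfsq P).add (int_shift_sq P t)).div_const 2
  apply h.congr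
  apply ae_of_all
  intro x
  simp [Pi.add_apply]

lemma shift_sq_eq (P : ℝ[X]) (t : ℝ) :
    (∫ x : ℝ, Ff P (x + t) ^ 2) = ∫ x : ℝ, Ff P x ^ 2 :=
  integral_add_right_eq_self (fun x => Ff P x ^ 2) t

/-- finiteness of the key lintegrals -/
lemma lint_shift_fin (g : ℝ → ℝ) (hgi : Integrable g) (hg0 : ∀ x, 0 ≤ g x) (u : ℝ) :
    (∫⁻ x : ℝ, ENNReal.ofReal (g (x + u))) ≠ ⊤ := by
  have hsh : Integrable (fun x => g (x + u)) := hgi.comp_add_right u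
  rw [← ofReal_integral_eq_lintegral_ofReal hsh (ae_of_all _ fun x => hg0 (x + u))]
  exact ENNReal.ofReal_ne_top

/-- D(t) ≤ t² ∫ F₁² , for t ≥ 0 -/
lemma Dbound (P : ℝ[X]) (t : ℝ) (ht : 0 ≤ t) :
    (∫ x : ℝ, (Ff P (x + t) - Ff P x) ^ 2) ≤ t ^ 2 * ∫ x : ℝ, F1 P x ^ 2 := by
  set g : ℝ → ℝ := fun x => F1 P x ^ 2 with hg
  have hgc : Continuous g := (contF1 P).pow 2
  have hg0 : ∀ x, 0 ≤ g x := fun x => sq_nonneg _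
  have hgi : Integrable g := intF1sq P
  have hs : MeasurableSet (Ioc (0:ℝ) t) := measurableSet_Ioc
  -- gen_swap with φ = 1, w = 1
  have hG : ∀ x : ℝ, (∫⁻ u in Ioc (0:ℝ) t, ENNReal.ofReal ((1:ℝ) * g (x + u))) ≠ ⊤ := by
    intro x
    simp_rw [one_mul]
    apply ne_top_of_le_ne_top (b := ∫⁻ u : ℝ, ENNReal.ofReal (g (x + u)))
    · have htrans : (∫⁻ u : ℝ, ENNReal.ofReal (g (x + u))) = ∫⁻ u : ℝ, ENNReal.ofReal (g u) := by
        simp_rw [add_comm x]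
        exact lintegral_add_right_eq_self (μ := volume) (fun u => ENNReal.ofReal (g u)) x
      rw [htrans, ← ofReal_integral_eq_lintegral_ofReal hgi (ae_of_all _ hg0)]
      exact ENNReal.ofReal_ne_top
    · exact lintegral_mono' Measure.restrict_le_self le_rfl
  have hΛ : ∀ u : ℝ, (∫⁻ x : ℝ, ENNReal.ofReal ((1:ℝ) * g (x + u))) ≠ ⊤ := by
    intro u
    simp_rw [one_mul]
    exact lint_shift_fin g hgi hg0 u
  have hcon : ∀ u : ℝ, (∫⁻ x : ℝ, ENNReal.ofReal ((1:ℝ) * g (x + u)))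
      = ENNReal.ofReal (∫ x : ℝ, g x) := by
    intro u
    simp_rw [one_mul]
    rw [← ofReal_integral_eq_lintegral_ofReal (hgi.comp_add_right u)
      (ae_of_all _ fun x => hg0 _)]
    congr 1
    exact integral_add_right_eq_self g u
  have hTot : (∫⁻ u in Ioc (0:ℝ) t, ENNReal.ofReal ((1:ℝ))
      * ∫⁻ x : ℝ, ENNReal.ofReal ((1:ℝ) * g (x + u))) ≠ ⊤ := by
    simp_rw [hcon]
    rw [setLIntegral_const]
    refine ENNReal.mul_ne_top (ENNReal.mul_ne_top ENNReal.ofReal_ne_top ENNReal.ofReal_ne_top) ?_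
    rw [Real.volume_Ioc]
    exact ENNReal.ofReal_ne_top
  obtain ⟨heq, hint, -⟩ := gen_swap (fun _ => 1) g (fun _ => 1) (Ioc 0 t) hs
    continuous_const (fun _ => zero_le_one) hgc hg0 continuous_const (fun _ => zero_le_one)
    hG hΛ hTot
  simp_rw [one_mul] at heq hint
  -- value of the swapped integral
  have hval : (∫ x : ℝ, ∫ u in Ioc (0:ℝ) t, g (x + u)) = t * ∫ x : ℝ, g x := by
    rw [heq]
    have h2 : ∀ u : ℝ, (∫ x : ℝ, g (x + u)) = ∫ x : ℝ, g x := fun u =>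
      integral_add_right_eq_self g u
    rw [setIntegral_congr_fun hs (fun u _ => h2 u)]
    rw [setIntegral_const, measureReal_def, Real.volume_Ioc, smul_eq_mul]
    rw [ENNReal.toReal_ofReal (by linarith)]
    rw [sub_zero]
  -- pointwise bound
  have hpt : ∀ x : ℝ, (Ff P (x + t) - Ff P x) ^ 2 ≤ t * ∫ u in Ioc (0:ℝ) t, g (x + u) := by
    intro x
    have ftc : (∫ u in x..(x + t), F1 P u) = Ff P (x + t) - Ff P x :=
      intervalIntegral.integral_eq_sub_of_hasDerivAt (fun u _ => hasDerivFf P u)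
        ((contF1 P).intervalIntegrable _ _)
    have cs := csi (F1 P) (contF1 P) (by linarith : x ≤ x + t)
    rw [ftc] at cs
    have hchg : (∫ u in x..(x + t), F1 P u ^ 2) = ∫ u in (0:ℝ)..t, g (x + u) := by
      have h := intervalIntegral.integral_comp_add_left (a := (0:ℝ)) (b := t)
        (fun u => F1 P u ^ 2) x
      rw [h, add_zero]
    have hIoc : (∫ u in (0:ℝ)..t, g (x + u)) = ∫ u in Ioc (0:ℝ) t, g (x + u) :=
      intervalIntegral.integral_of_le ht
    have hxt : x + t - x = t := by ring
    rw [hxt, hchg, hIoc] at cs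
    exact cs
  have hmono := integral_mono (int_diffsq P t) (hint.const_mul t)
    (fun x => by simpa using hpt x)
  calc (∫ x : ℝ, (Ff P (x + t) - Ff P x) ^ 2)
      ≤ ∫ x : ℝ, t * ∫ u in Ioc (0:ℝ) t, g (x + u) := hmono
    _ = t * ∫ x : ℝ, ∫ u in Ioc (0:ℝ) t, g (x + u) := integral_const_mul t _
    _ = t * (t * ∫ x : ℝ, g x) := by rw [hval]
    _ = t ^ 2 * ∫ x : ℝ, F1 P x ^ 2 := by rw [hg]; ring

/-- upper bound: L t ≤ ∫ F² -/
lemma K1 (P : ℝ[X]) (t : ℝ) :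
    (∫ x : ℝ, |Ff P x| * |Ff P (x + t)|) ≤ ∫ x : ℝ, Ff P x ^ 2 := by
  have hmono := integral_mono (int_absprod P t)
    (int_sumsq P t)
    (fun x => by
      simp only []
      nlinarith [sq_nonneg (|Ff P x| - |Ff P (x + t)|), sq_abs (Ff P x),
        sq_abs (Ff P (x + t))])
  calc (∫ x : ℝ, |Ff P x| * |Ff P (x + t)|)
      ≤ ∫ x : ℝ, (Ff P x ^ 2 + Ff P (x + t) ^ 2) / 2 := hmono
    _ = ((∫ x : ℝ, Ff P x ^ 2) + ∫ x : ℝ, Ff P (x + t) ^ 2) / 2 := by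
        rw [integral_div, integral_add (intFfsq P) (int_shift_sq P t)]
    _ = ∫ x : ℝ, Ff P x ^ 2 := by rw [shift_sq_eq]; ring

/-- symmetry of L -/
lemma Lsymm (P : ℝ[X]) (t : ℝ) :
    (∫ x : ℝ, |Ff P x| * |Ff P (x + t)|) = ∫ x : ℝ, |Ff P x| * |Ff P (x + -t)| := by
  have h := integral_add_right_eq_self (μ := (volume : Measure ℝ))
    (fun x => |Ff P x| * |Ff P (x + t)|) (-t)
  rw [← h]
  apply integral_congr_ae
  apply ae_of_all
  intro x
  simp only []
  rw [show x + -t + t = x by ring]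
  ring

/-- lower bound for nonnegative t -/
lemma K2nn (P : ℝ[X]) (k : ℕ) (hdeg : P.natDegree ≤ k + 1) (t : ℝ) (ht : 0 ≤ t) :
    (∫ x : ℝ, Ff P x ^ 2) - ((k : ℝ) + 1) * t ^ 2 * (∫ x : ℝ, Ff P x ^ 2)
      ≤ ∫ x : ℝ, |Ff P x| * |Ff P (x + t)| := by
  set B := ∫ x : ℝ, Ff P x ^ 2 with hB
  set D := ∫ x : ℝ, (Ff P (x + t) - Ff P x) ^ 2 with hD
  -- ∫ F x F (x+t) = B - D/2
  have hprod : (∫ x : ℝ, Ff P x * Ff P (x + t)) = B - D / 2 := by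
    have e : ∀ x : ℝ, Ff P x * Ff P (x + t)
        = (Ff P x ^ 2 + Ff P (x + t) ^ 2) / 2 - (Ff P (x + t) - Ff P x) ^ 2 / 2 := by
      intro x; ring
    rw [integral_congr_ae (ae_of_all _ e)]
    rw [integral_sub (int_sumsq P t) ((int_diffsq P t).div_const 2)]
    rw [integral_div, integral_div, integral_add (intFfsq P) (int_shift_sq P t), shift_sq_eq]
    rw [← hB, ← hD]
    ring
  have hDb : D ≤ ((k : ℝ) + 1) * t ^ 2 * 2 * B := by
    have h1 := Dbound P t ht
    have h2 := DB P k hdeg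
    have hF1nn : (0:ℝ) ≤ ∫ x : ℝ, F1 P x ^ 2 := integral_nonneg (fun x => sq_nonneg _)
    have ht2 : (0:ℝ) ≤ t ^ 2 := sq_nonneg t
    calc D ≤ t ^ 2 * ∫ x : ℝ, F1 P x ^ 2 := h1
      _ ≤ t ^ 2 * (2 * (k + 1) * B) := by
          apply mul_le_mul_of_nonneg_left _ ht2
          push_cast at h2 ⊢
          exact h2
      _ = ((k : ℝ) + 1) * t ^ 2 * 2 * B := by ring
  have habs := integral_mono (int_prod P t) (int_absprod P t)
    (fun x => by
      simp only []
      rw [← abs_mul]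
      exact le_abs_self _)
  linarith [habs, hprod, hDb]

/-- lower bound for |t| ≤ c -/
lemma K2 (P : ℝ[X]) (k : ℕ) (hdeg : P.natDegree ≤ k + 1) (c t : ℝ) (ht : |t| ≤ c) :
    (∫ x : ℝ, Ff P x ^ 2) - ((k : ℝ) + 1) * c ^ 2 * (∫ x : ℝ, Ff P x ^ 2)
      ≤ ∫ x : ℝ, |Ff P x| * |Ff P (x + t)| := by
  have hBnn : (0:ℝ) ≤ ∫ x : ℝ, Ff P x ^ 2 := integral_nonneg (fun x => sq_nonneg _)
  have ht2 : t ^ 2 ≤ c ^ 2 := by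
    rw [← sq_abs t]
    apply pow_le_pow_left₀ (abs_nonneg t) ht
  have hmono : ((k : ℝ) + 1) * t ^ 2 * (∫ x : ℝ, Ff P x ^ 2)
      ≤ ((k : ℝ) + 1) * c ^ 2 * (∫ x : ℝ, Ff P x ^ 2) := by
    apply mul_le_mul_of_nonneg_right _ hBnn
    apply mul_le_mul_of_nonneg_left ht2
    positivity
  rcases le_or_gt 0 t with h0 | h0
  · linarith [K2nn P k hdeg t h0]
  · have h := K2nn P k hdeg (-t) (by linarith)
    rw [← Lsymm] at h
    have : (-t) ^ 2 = t ^ 2 := by ring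
    rw [this] at h
    linarith

end Stmt12Aux

open Stmt12Aux

/-- for `F(x) = e^{-x²/2} ∏_{j=1}^m (x - λ_j)` with `m < n`, `2nc² ∈ (0,1)`,
an interval `A = (a,b) ⊂ (0,c)`, `A₁ = A ∪ (-A)` and `φ(A) = ∫_A u du`:
`(1-nc²)·2φ(A) ∫|F|² ≤ ∫ dx₁ ∫_{x₁+A₁} dx₂ |x₁-x₂||F(x₁)||F(x₂)| ≤ 2φ(A) ∫|F|²`. -/
theorem stmt12 (m n : ℕ) (hm : 0 < m) (hmn : m < n) (lam : Fin m → ℝ)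
    (c : ℝ) (hc : 0 < c) (hnc : 2 * n * c ^ 2 < 1)
    (a b : ℝ) (ha : 0 ≤ a) (hb : b ≤ c)
    (F : ℝ → ℝ) (hF : F = fun x => Real.exp (-x ^ 2 / 2) * ∏ j, (x - lam j))
    (A₁ : Set ℝ) (hA₁ : A₁ = Set.Ioo a b ∪ Set.Ioo (-b) (-a)) :
    (1 - n * c ^ 2) * (2 * ∫ u in Set.Ioo a b, u) * (∫ x : ℝ, (F x) ^ 2) ≤
      (∫ x₁ : ℝ, ∫ x₂ in {y : ℝ | y - x₁ ∈ A₁}, |x₁ - x₂| * |F x₁| * |F x₂|) ∧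
    (∫ x₁ : ℝ, ∫ x₂ in {y : ℝ | y - x₁ ∈ A₁}, |x₁ - x₂| * |F x₁| * |F x₂|) ≤
      (2 * ∫ u in Set.Ioo a b, u) * ∫ x : ℝ, (F x) ^ 2 := by
  classical
  -- the polynomial P with F = Ff P
  set P : ℝ[X] := ∏ j : Fin m, (X - C (lam j)) with hP
  have hFP : F = Ff P := by
    funext x
    rw [hF]
    unfold Ff
    rw [hP, eval_prod]
    simp [eval_sub, eval_X, eval_C]
  -- degree bound
  set k : ℕ := m - 1 with hk
  have hmk : m = k + 1 := by omega
  have hdegP : P.natDegree ≤ k + 1 := by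
    rw [hP, ← hmk]
    refine le_trans (natDegree_prod_le _ _) ?_
    have : ∀ j : Fin m, (X - C (lam j)).natDegree = 1 := fun j => natDegree_X_sub_C _
    simp only [this, Finset.sum_const, Finset.card_univ, Fintype.card_fin, smul_eq_mul, mul_one]
    exact le_rfl
  set B : ℝ := ∫ x : ℝ, Ff P x ^ 2 with hB
  have hBnn : 0 ≤ B := integral_nonneg fun x => sq_nonneg _
  -- A₁ facts
  have hA₁meas : MeasurableSet A₁ := by
    rw [hA₁]; exact measurableSet_Ioo.union measurableSet_Ioo
  have habs_le : ∀ u ∈ A₁, |u| ≤ c := by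
    intro u hu
    rw [hA₁] at hu
    rcases hu with ⟨h1, h2⟩ | ⟨h1, h2⟩
    · rw [abs_of_pos (by linarith)]
      linarith
    · rw [abs_of_neg (by linarith)]
      linarith
  have hvolA₁ : volume A₁ ≠ ⊤ := by
    rw [hA₁]
    apply ne_top_of_le_ne_top _ (measure_union_le _ _)
    simp [Real.volume_Ioo]
  -- inner-integral rewrite
  set φf : ℝ → ℝ := fun x => |Ff P x| with hφf
  have hinner : ∀ x₁ : ℝ,
      (∫ x₂ in {y : ℝ | y - x₁ ∈ A₁}, |x₁ - x₂| * |F x₁| * |F x₂|)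
        = φf x₁ * ∫ u in A₁, |u| * φf (x₁ + u) := by
    intro x₁
    have hSmeas : MeasurableSet {y : ℝ | y - x₁ ∈ A₁} := by
      have : {y : ℝ | y - x₁ ∈ A₁} = (fun y => y - x₁) ⁻¹' A₁ := rfl
      rw [this]
      exact hA₁meas.preimage (measurable_id.sub_const x₁)
    set f : ℝ → ℝ := fun x₂ => |x₁ - x₂| * |F x₁| * |F x₂| with hf2
    rw [← integral_indicator hSmeas]
    rw [← integral_add_right_eq_self (μ := (volume : Measure ℝ))
      (fun y => Set.indicator {y : ℝ | y - x₁ ∈ A₁} f y) x₁]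
    have hind : ∀ u : ℝ, Set.indicator {y : ℝ | y - x₁ ∈ A₁} f (u + x₁)
        = Set.indicator A₁ (fun u => f (u + x₁)) u := by
      intro u
      by_cases h : u ∈ A₁
      · rw [Set.indicator_of_mem (by simpa using h), Set.indicator_of_mem h]
      · rw [Set.indicator_of_notMem (by simpa using h), Set.indicator_of_notMem h]
    simp_rw [hind]
    rw [integral_indicator hA₁meas]
    have hfe : ∀ u : ℝ, f (u + x₁) = φf x₁ * (|u| * φf (x₁ + u)) := by
      intro u
      rw [hf2, hφf, hFP]
      simp only []
      rw [show x₁ - (u + x₁) = -u by ring, abs_neg, show u + x₁ = x₁ + u by ring]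
      ring
    rw [setIntegral_congr_fun hA₁meas (fun u _ => hfe u)]
    rw [integral_const_mul]
  -- lintegral finiteness facts
  have lint_shift_fin2 : ∀ x : ℝ, (∫⁻ u : ℝ, ENNReal.ofReal (φf (x + u))) ≠ ⊤ := by
    intro x
    have htrans : (∫⁻ u : ℝ, ENNReal.ofReal (φf (x + u))) = ∫⁻ u : ℝ, ENNReal.ofReal (φf u) := by
      simp_rw [add_comm x]
      exact lintegral_add_right_eq_self (μ := volume) (fun u => ENNReal.ofReal (φf u)) x
    rw [htrans, ← ofReal_integral_eq_lintegral_ofReal ((intFf P).abs)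
      (ae_of_all _ fun u => abs_nonneg _)]
    exact ENNReal.ofReal_ne_top
  have hG : ∀ x : ℝ, (∫⁻ u in A₁, ENNReal.ofReal (|u| * φf (x + u))) ≠ ⊤ := by
    intro x
    apply ne_top_of_le_ne_top (b := ENNReal.ofReal c * ∫⁻ u : ℝ, ENNReal.ofReal (φf (x + u)))
    · exact ENNReal.mul_ne_top ENNReal.ofReal_ne_top (lint_shift_fin2 x)
    · calc (∫⁻ u in A₁, ENNReal.ofReal (|u| * φf (x + u)))
          ≤ ∫⁻ u in A₁, ENNReal.ofReal c * ENNReal.ofReal (φf (x + u)) := by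
            apply lintegral_mono_ae
            filter_upwards [ae_restrict_mem hA₁meas] with u hu
            rw [ENNReal.ofReal_mul (abs_nonneg u)]
            exact mul_le_mul_left (ENNReal.ofReal_le_ofReal (habs_le u hu)) _
        _ ≤ ENNReal.ofReal c * ∫⁻ u : ℝ, ENNReal.ofReal (φf (x + u)) := by
            rw [lintegral_const_mul' _ _ ENNReal.ofReal_ne_top]
            exact mul_le_mul_right (lintegral_mono' Measure.restrict_le_self le_rfl) _
  have hΛval : ∀ u : ℝ, (∫⁻ x : ℝ, ENNReal.ofReal (φf x * φf (x + u)))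
      = ENNReal.ofReal (∫ x : ℝ, φf x * φf (x + u)) := by
    intro u
    rw [ofReal_integral_eq_lintegral_ofReal (int_absprod P u)
      (ae_of_all _ fun x => mul_nonneg (abs_nonneg _) (abs_nonneg _))]
  have hΛ : ∀ u : ℝ, (∫⁻ x : ℝ, ENNReal.ofReal (φf x * φf (x + u))) ≠ ⊤ := by
    intro u
    rw [hΛval u]
    exact ENNReal.ofReal_ne_top
  have hTot : (∫⁻ u in A₁, ENNReal.ofReal (|u|)
      * ∫⁻ x : ℝ, ENNReal.ofReal (φf x * φf (x + u))) ≠ ⊤ := by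
    apply ne_top_of_le_ne_top (b := ENNReal.ofReal c * ENNReal.ofReal B * volume A₁)
    · exact ENNReal.mul_ne_top (ENNReal.mul_ne_top ENNReal.ofReal_ne_top
        ENNReal.ofReal_ne_top) hvolA₁
    · calc (∫⁻ u in A₁, ENNReal.ofReal (|u|)
          * ∫⁻ x : ℝ, ENNReal.ofReal (φf x * φf (x + u)))
          ≤ ∫⁻ _ in A₁, ENNReal.ofReal c * ENNReal.ofReal B := by
            apply lintegral_mono_ae
            filter_upwards [ae_restrict_mem hA₁meas] with u hu
            rw [hΛval u]
            apply mul_le_mul'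
            · exact ENNReal.ofReal_le_ofReal (habs_le u hu)
            · exact ENNReal.ofReal_le_ofReal (K1 P u)
        _ = ENNReal.ofReal c * ENNReal.ofReal B * volume A₁ := by
            rw [setLIntegral_const]
  -- the swap
  obtain ⟨heq, -, hint3⟩ := gen_swap φf φf (fun u => |u|) A₁ hA₁meas
    ((contFf P).abs) (fun x => abs_nonneg _)
    ((contFf P).abs) (fun x => abs_nonneg _)
    continuous_abs (fun x => abs_nonneg _)
    hG hΛ hTot
  -- outer integral rewrite
  have hDI : (∫ x₁ : ℝ, ∫ x₂ in {y : ℝ | y - x₁ ∈ A₁}, |x₁ - x₂| * |F x₁| * |F x₂|)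
      = ∫ u in A₁, |u| * ∫ x : ℝ, φf x * φf (x + u) := by
    rw [← heq]
    exact integral_congr_ae (ae_of_all _ hinner)
  -- the weight integral
  have hdisj : Disjoint (Ioo a b) (Ioo (-b) (-a)) := by
    rw [Set.disjoint_left]
    rintro u ⟨h1, h2⟩ ⟨h3, h4⟩
    linarith
  have int_abs_Ioo : ∀ (s t : ℝ), IntegrableOn (fun u : ℝ => |u|) (Ioo s t) := by
    intro s t
    exact (continuous_abs.integrableOn_Icc).mono_set Ioo_subset_Icc_self
  have hW : (∫ u in A₁, |u|) = 2 * ∫ u in Ioo a b, u := by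
    rw [hA₁, setIntegral_union hdisj measurableSet_Ioo (int_abs_Ioo a b)
      (int_abs_Ioo (-b) (-a))]
    have h1 : (∫ u in Ioo a b, |u|) = ∫ u in Ioo a b, u := by
      apply setIntegral_congr_fun measurableSet_Ioo
      intro u hu
      exact abs_of_pos (by rcases hu with ⟨h1, _⟩; linarith)
    have h2 : (∫ u in Ioo (-b) (-a), |u|) = ∫ u in Ioo a b, u := by
      have hneg := integral_neg_eq_self (μ := (volume : Measure ℝ))
        (fun u => Set.indicator (Ioo (-b) (-a)) (fun v => |v|) u)
      rw [← integral_indicator measurableSet_Ioo, ← hneg]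
      have : ∀ u : ℝ, Set.indicator (Ioo (-b) (-a)) (fun v => |v|) (-u)
          = Set.indicator (Ioo a b) (fun v => v) u := by
        intro u
        by_cases h : u ∈ Ioo a b
        · rw [Set.indicator_of_mem (by
            rcases h with ⟨h1, h2⟩
            exact ⟨by linarith, by linarith⟩), Set.indicator_of_mem h]
          rcases h with ⟨h1, h2⟩
          rw [abs_neg, abs_of_pos (by linarith)]
        · rw [Set.indicator_of_notMem (by
            intro hcon
            rcases hcon with ⟨h1, h2⟩
            exact h ⟨by linarith, by linarith⟩), Set.indicator_of_notMem h]
      simp_rw [this]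
      rw [integral_indicator measurableSet_Ioo]
    rw [h1, h2]
    ring
  -- integrable comparison functions on A₁
  have int_cmp : ∀ r : ℝ, IntegrableOn (fun u : ℝ => r * |u|) A₁ := by
    intro r
    rw [hA₁]
    exact IntegrableOn.union ((int_abs_Ioo a b).const_mul r)
      ((int_abs_Ioo (-b) (-a)).const_mul r)
  -- positivity of 1 - n c²
  have hnc' : (n : ℝ) * c ^ 2 < 1 := by
    have h2 : (0:ℝ) ≤ (n:ℝ) * c ^ 2 := by positivity
    have : 2 * (n:ℝ) * c ^ 2 < 1 := by exact_mod_cast hnc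
    linarith
  -- bounds on L u for u ∈ A₁
  have hlow : ∀ u ∈ A₁, (1 - (n:ℝ) * c ^ 2) * B ≤ ∫ x : ℝ, φf x * φf (x + u) := by
    intro u hu
    have h := K2 P k hdegP c u (habs_le u hu)
    have hcast : ((k : ℝ) + 1) ≤ (n : ℝ) := by
      have : k + 1 ≤ n := by omega
      exact_mod_cast this
    have hc2 : (0:ℝ) ≤ c ^ 2 := sq_nonneg c
    rw [← hB] at h
    have : ((k : ℝ) + 1) * c ^ 2 * B ≤ (n:ℝ) * c ^ 2 * B := by
      apply mul_le_mul_of_nonneg_right _ hBnn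
      apply mul_le_mul_of_nonneg_right hcast hc2
    calc (1 - (n:ℝ) * c ^ 2) * B = B - (n:ℝ) * c ^ 2 * B := by ring
      _ ≤ B - ((k : ℝ) + 1) * c ^ 2 * B := by linarith
      _ ≤ _ := h
  have hup : ∀ u : ℝ, (∫ x : ℝ, φf x * φf (x + u)) ≤ B := fun u => K1 P u
  -- final sandwich
  have hlower : (1 - (n:ℝ) * c ^ 2) * (2 * ∫ u in Ioo a b, u) * B
      ≤ ∫ u in A₁, |u| * ∫ x : ℝ, φf x * φf (x + u) := by
    have step : (∫ u in A₁, ((1 - (n:ℝ) * c ^ 2) * B) * |u|)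
        ≤ ∫ u in A₁, |u| * ∫ x : ℝ, φf x * φf (x + u) := by
      apply setIntegral_mono_on (int_cmp _) hint3 hA₁meas
      intro u hu
      rw [mul_comm]
      apply mul_le_mul_of_nonneg_left (hlow u hu) (abs_nonneg u)
    calc (1 - (n:ℝ) * c ^ 2) * (2 * ∫ u in Ioo a b, u) * B
        = ((1 - (n:ℝ) * c ^ 2) * B) * (∫ u in A₁, |u|) := by rw [hW]; ring
      _ = ∫ u in A₁, ((1 - (n:ℝ) * c ^ 2) * B) * |u| := (integral_const_mul _ _).symm
      _ ≤ _ := step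
  have hupper : (∫ u in A₁, |u| * ∫ x : ℝ, φf x * φf (x + u))
      ≤ (2 * ∫ u in Ioo a b, u) * B := by
    have step : (∫ u in A₁, |u| * ∫ x : ℝ, φf x * φf (x + u))
        ≤ ∫ u in A₁, B * |u| := by
      apply setIntegral_mono_on hint3 (int_cmp B) hA₁meas
      intro u hu
      rw [mul_comm B]
      apply mul_le_mul_of_nonneg_left (hup u) (abs_nonneg u)
    calc (∫ u in A₁, |u| * ∫ x : ℝ, φf x * φf (x + u))
        ≤ ∫ u in A₁, B * |u| := step
      _ = B * (∫ u in A₁, |u|) := integral_const_mul _ _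
      _ = (2 * ∫ u in Ioo a b, u) * B := by rw [hW]; ring
  have hBF : (∫ x : ℝ, (F x) ^ 2) = B := by
    rw [hB, hFP]
  constructor
  · rw [hDI, hBF]
    exact hlower
  · rw [hDI, hBF]
    exact hupper

end
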